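/- Let A be a self-adjoint operator on a Hilbert space H and let g be a bounded vector for A, i.e. g ∈ ∩ₖ D(Aᵏ) with ‖Aⁿg‖ ≤ B_gⁿ for all n and some constant B_g > 0. Then the pair (A,g) satisfies the Krylov-core condition: K(A,g) is dense in closure(K(A,g)) ∩ D(A) in the graph norm ‖h‖_A = (‖h‖² + ‖Ah‖²)^{1/2}. Consequently A is K(A,g)-reduced in the generalised sense. -/

import Mathlib

open scoped ComplexInnerProductSpace

noncomputable section

private def krylovSum {H : Type*} [AddCommGroup H] [Module ℂ H]
    (ψ : ℕ → H) (n : ℕ) (c : ℕ →₀ ℂ) : H :=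
  c.sum fun k z => z • ψ (k + n)

private theorem krylovSum_mem {H : Type*} [AddCommGroup H] [Module ℂ H]
    {ψ : ℕ → H} {p : Submodule ℂ H} (h : ∀ k, ψ k ∈ p) (n : ℕ) (c : ℕ →₀ ℂ) :
    krylovSum ψ n c ∈ p := by
  rw [krylovSum, Finsupp.sum]
  exact Submodule.sum_mem _ fun k _ => Submodule.smul_mem _ _ (h _)

private theorem krylovSum_mem_span {H : Type*} [AddCommGroup H] [Module ℂ H]
    (ψ : ℕ → H) (n : ℕ) (c : ℕ →₀ ℂ) :
    krylovSum ψ n c ∈ Submodule.span ℂ (Set.range ψ) :=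
  krylovSum_mem (fun k => Submodule.subset_span (Set.mem_range_self k)) n c

private theorem krylovSum_apply {H : Type*} [NormedAddCommGroup H] [InnerProductSpace ℂ H]
    (A : H →ₗ.[ℂ] H) (ψ : ℕ → H) (hmem : ∀ k, ψ k ∈ A.domain)
    (hstep : ∀ k, A ⟨ψ k, hmem k⟩ = ψ (k + 1)) (n : ℕ) (c : ℕ →₀ ℂ)
    (h : krylovSum ψ n c ∈ A.domain) :
    A ⟨krylovSum ψ n c, h⟩ = krylovSum ψ (n + 1) c := by
  have h1 : (⟨krylovSum ψ n c, h⟩ : A.domain) =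
      ∑ k ∈ c.support, (c k) • (⟨ψ (k + n), hmem _⟩ : A.domain) := by
    apply Subtype.ext
    simp [krylovSum, Finsupp.sum]
  show A.toFun _ = _
  rw [h1, map_sum]
  rw [krylovSum, Finsupp.sum]
  refine Finset.sum_congr rfl fun k _ => ?_
  rw [map_smul]
  show (c k) • (A ⟨ψ (k + n), hmem _⟩) = _
  rw [hstep (k + n), ← add_assoc]

private theorem krylovSum_norm_le {H : Type*} [NormedAddCommGroup H] [InnerProductSpace ℂ H]
    {ψ : ℕ → H} {B : ℝ} (hbdd : ∀ n : ℕ, ‖ψ n‖ ≤ B ^ n) (n : ℕ) (c : ℕ →₀ ℂ) :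
    ‖krylovSum ψ n c‖ ≤ (c.sum fun k z => ‖z‖ * B ^ k) * B ^ n := by
  rw [krylovSum, Finsupp.sum, Finsupp.sum, Finset.sum_mul]
  refine (norm_sum_le _ _).trans (Finset.sum_le_sum fun k _ => ?_)
  rw [norm_smul, mul_assoc, ← pow_add]
  exact mul_le_mul_of_nonneg_left (hbdd _) (norm_nonneg _)

private theorem krylov_bound {H : Type*} [NormedAddCommGroup H] [InnerProductSpace ℂ H]
    (A : H →ₗ.[ℂ] H) (ψ : ℕ → H) (hmem : ∀ k, ψ k ∈ A.domain)
    (hstep : ∀ k, A ⟨ψ k, hmem k⟩ = ψ (k + 1))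
    (hsym : ∀ u v : A.domain, ⟪(A u : H), (v : H)⟫ = ⟪(u : H), (A v : H)⟫)
    (B : ℝ) (hB : 0 < B) (hbdd : ∀ n : ℕ, ‖ψ n‖ ≤ B ^ n) (c : ℕ →₀ ℂ) :
    ‖krylovSum ψ 1 c‖ ≤ B * ‖krylovSum ψ 0 c‖ := by
  set a : ℕ → ℝ := fun n => ‖krylovSum ψ n c‖ with ha
  have hanneg : ∀ n, 0 ≤ a n := fun n => norm_nonneg _
  have hdom : ∀ m, krylovSum ψ m c ∈ A.domain := fun m => krylovSum_mem hmem m c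
  have hconv : ∀ n, a (n + 1) ^ 2 ≤ a n * a (n + 2) := by
    intro n
    have e1 : ⟪krylovSum ψ (n + 1) c, krylovSum ψ (n + 1) c⟫
        = ⟪krylovSum ψ n c, krylovSum ψ (n + 2) c⟫ := by
      have h1 := hsym ⟨krylovSum ψ n c, hdom n⟩ ⟨krylovSum ψ (n + 1) c, hdom (n + 1)⟩
      rw [krylovSum_apply A ψ hmem hstep n c, krylovSum_apply A ψ hmem hstep (n + 1) c] at h1
      exact h1
    have e2 : a (n + 1) ^ 2 = ‖⟪krylovSum ψ (n + 1) c, krylovSum ψ (n + 1) c⟫‖ := by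
      rw [inner_self_eq_norm_sq_to_K]
      simp [ha]
    rw [e2, e1]
    exact norm_inner_le_norm _ _
  have hL2 : ∀ n, a 1 * a n ≤ a 0 * a (n + 1) := by
    intro n
    induction n with
    | zero => rw [mul_comm]
    | succ n ih =>
      rcases eq_or_lt_of_le (hanneg (n + 1)) with h0 | h0
      · rw [← h0, mul_zero]
        exact mul_nonneg (hanneg 0) (hanneg (n + 2))
      · have h1 : (a 1 * a (n + 1)) * a (n + 1) ≤ (a 0 * a (n + 2)) * a (n + 1) := by
          calc (a 1 * a (n + 1)) * a (n + 1) = a 1 * a (n + 1) ^ 2 := by ring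
          _ ≤ a 1 * (a n * a (n + 2)) :=
              mul_le_mul_of_nonneg_left (hconv n) (hanneg 1)
          _ = (a 1 * a n) * a (n + 2) := by ring
          _ ≤ (a 0 * a (n + 1)) * a (n + 2) :=
              mul_le_mul_of_nonneg_right ih (hanneg (n + 2))
          _ = (a 0 * a (n + 2)) * a (n + 1) := by ring
        exact le_of_mul_le_mul_right h1 h0
  have hL3 : ∀ n, a 1 ^ (n + 1) ≤ a 0 ^ n * a (n + 1) := by
    intro n
    induction n with
    | zero => simp
    | succ n ih =>
      calc a 1 ^ (n + 2) = a 1 ^ (n + 1) * a 1 := by ring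
      _ ≤ (a 0 ^ n * a (n + 1)) * a 1 := mul_le_mul_of_nonneg_right ih (hanneg 1)
      _ = a 0 ^ n * (a 1 * a (n + 1)) := by ring
      _ ≤ a 0 ^ n * (a 0 * a (n + 2)) :=
          mul_le_mul_of_nonneg_left (hL2 (n + 1)) (pow_nonneg (hanneg 0) n)
      _ = a 0 ^ (n + 1) * a (n + 2) := by ring
  set C : ℝ := c.sum fun k z => ‖z‖ * B ^ k with hC
  have hCle : ∀ n, a n ≤ C * B ^ n := fun n => krylovSum_norm_le hbdd n c
  show a 1 ≤ B * a 0
  rcases eq_or_lt_of_le (hanneg 0) with h00 | h00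
  · -- a 0 = 0 forces a 1 = 0
    have h1 : a 1 ^ 2 ≤ 0 := by
      have := hconv 0
      rw [← h00, zero_mul] at this
      exact this
    have h2 : a 1 = 0 := by nlinarith [hanneg 1]
    rw [h2, ← h00, mul_zero]
  · -- a 0 > 0
    have hCpos : 0 < C := lt_of_lt_of_le h00 (by simpa using hCle 0)
    by_contra hcon
    push_neg at hcon
    set r : ℝ := a 1 / (B * a 0) with hr
    have hrpos : 0 < B * a 0 := mul_pos hB h00
    have hr1 : 1 < r := (one_lt_div hrpos).mpr hcon
    have hrn : ∀ n, r ^ (n + 1) ≤ C / a 0 := by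
      intro n
      rw [hr, div_pow, div_le_div_iff₀ (pow_pos hrpos _) h00]
      calc a 1 ^ (n + 1) * a 0 ≤ (a 0 ^ n * a (n + 1)) * a 0 :=
        mul_le_mul_of_nonneg_right (hL3 n) (hanneg 0)
      _ ≤ (a 0 ^ n * (C * B ^ (n + 1))) * a 0 :=
        mul_le_mul_of_nonneg_right
          (mul_le_mul_of_nonneg_left (hCle (n + 1)) (pow_nonneg (hanneg 0) n)) (hanneg 0)
      _ = C * (B ^ (n + 1) * a 0 ^ (n + 1)) := by ring
      _ = C * (B * a 0) ^ (n + 1) := by rw [mul_pow]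
    obtain ⟨m, hm⟩ := (tendsto_pow_atTop_atTop_of_one_lt hr1).eventually_gt_atTop (C / a 0)
      |>.exists
    have := hrn m
    have hmm : r ^ m ≤ r ^ (m + 1) :=
      pow_le_pow_right₀ (le_of_lt hr1) (Nat.le_succ m)
    linarith
  
end
/-- If `A` is self-adjoint and `g` is a bounded vector for `A` (`‖Aⁿg‖ ≤ B^n`, orbit
`ψ k = Aᵏg`), then the pair `(A,g)` satisfies the Krylov-core condition (graph-norm
density of `K(A,g)` in `closure(K(A,g)) ∩ D(A)`), and consequently `A` is
`K(A,g)`-reduced in the generalised sense: `A` maps `closure(K(A,g)) ∩ D(A)` into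
`closure(K(A,g))` and `K(A,g)^⊥ ∩ D(A)` into `K(A,g)^⊥`. -/
theorem stmt18 {H : Type*} [NormedAddCommGroup H] [InnerProductSpace ℂ H] [CompleteSpace H]
    (A : H →ₗ.[ℂ] H) (hdense : Dense (A.domain : Set H))
    (hsa : A.adjoint = A)
    (g : H) (ψ : ℕ → H) (hψ0 : ψ 0 = g)
    (hmem : ∀ k, ψ k ∈ A.domain)
    (hstep : ∀ k, A ⟨ψ k, hmem k⟩ = ψ (k + 1))
    (B : ℝ) (hB : 0 < B) (hbdd : ∀ n : ℕ, ‖ψ n‖ ≤ B ^ n) :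
    (∀ x : H, ∀ hx : x ∈ A.domain,
        x ∈ closure ((Submodule.span ℂ (Set.range ψ)) : Set H) →
        (x, A ⟨x, hx⟩) ∈ closure {p : H × H | ∃ hp : p.1 ∈ A.domain,
            p.1 ∈ Submodule.span ℂ (Set.range ψ) ∧ A ⟨p.1, hp⟩ = p.2})
    ∧ (∀ x : H, ∀ hx : x ∈ A.domain,
        x ∈ closure ((Submodule.span ℂ (Set.range ψ)) : Set H) →
        A ⟨x, hx⟩ ∈ closure ((Submodule.span ℂ (Set.range ψ)) : Set H))
    ∧ (∀ x : H, ∀ hx : x ∈ A.domain,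
        x ∈ (Submodule.span ℂ (Set.range ψ))ᗮ →
        A ⟨x, hx⟩ ∈ (Submodule.span ℂ (Set.range ψ))ᗮ) := by
  set K := Submodule.span ℂ (Set.range ψ) with hKdef
  have hsym : ∀ u v : A.domain, ⟪(A u : H), (v : H)⟫ = ⟪(u : H), (A v : H)⟫ := by
    have h := LinearPMap.adjoint_isFormalAdjoint (T := A) hdense
    rw [hsa] at h
    exact h
  have hKdom : ∀ x, x ∈ K → x ∈ A.domain := fun x hx =>
    Submodule.span_le.mpr (by rintro _ ⟨k, rfl⟩; exact hmem k) hx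
  have hAK : ∀ x (hx : x ∈ A.domain), x ∈ K →
      A ⟨x, hx⟩ ∈ K ∧ ‖A ⟨x, hx⟩‖ ≤ B * ‖x‖ := by
    intro x hx hxK
    obtain ⟨c, hc⟩ := Finsupp.mem_span_range_iff_exists_finsupp.mp hxK
    have hx0 : krylovSum ψ 0 c = x := by
      rw [← hc, krylovSum]
      simp
    have h0 : (⟨x, hx⟩ : A.domain) = ⟨krylovSum ψ 0 c, krylovSum_mem hmem 0 c⟩ :=
      Subtype.ext hx0.symm
    rw [h0, krylovSum_apply A ψ hmem hstep 0 c]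
    refine ⟨krylovSum_mem_span ψ 1 c, ?_⟩
    rw [← hx0]
    exact krylov_bound A ψ hmem hstep hsym B hB hbdd c
  have hmain : ∀ x, ∀ hx : x ∈ A.domain, x ∈ closure (K : Set H) →
      ∃ u : ℕ → H, ∃ hu : ∀ j, u j ∈ K,
        Filter.Tendsto u Filter.atTop (nhds x) ∧
        Filter.Tendsto (fun j => A ⟨u j, hKdom _ (hu j)⟩) Filter.atTop
          (nhds (A ⟨x, hx⟩)) := by
    intro x hx hxc
    obtain ⟨u, humem, hulim⟩ := mem_closure_iff_seq_limit.mp hxc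
    refine ⟨u, humem, hulim, ?_⟩
    set Au : ℕ → H := fun j => A ⟨u j, hKdom _ (humem j)⟩ with hAu
    have hlip : ∀ i j, ‖Au i - Au j‖ ≤ B * ‖u i - u j‖ := by
      intro i j
      have hsub : u i - u j ∈ K := Submodule.sub_mem _ (humem i) (humem j)
      have heq : Au i - Au j = A ⟨u i - u j, hKdom _ hsub⟩ := by
        show A.toFun _ - A.toFun _ = A.toFun _
        rw [← map_sub]
        congr 1
      rw [heq]
      exact (hAK _ _ hsub).2
    have hcauchy : CauchySeq Au := by
      rw [Metric.cauchySeq_iff]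
      intro ε hε
      obtain ⟨N, hN⟩ := Metric.cauchySeq_iff.mp hulim.cauchySeq (ε / B) (div_pos hε hB)
      refine ⟨N, fun i hi j hj => ?_⟩
      rw [dist_eq_norm]
      calc ‖Au i - Au j‖ ≤ B * ‖u i - u j‖ := hlip i j
      _ < B * (ε / B) := by
          refine mul_lt_mul_of_pos_left ?_ hB
          rw [← dist_eq_norm]
          exact hN i hi j hj
      _ = ε := mul_div_cancel₀ ε (ne_of_gt hB)
    obtain ⟨y, hy⟩ := cauchySeq_tendsto_of_complete hcauchy
    have hyval : y = A ⟨x, hx⟩ := by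
      apply hdense.eq_of_inner_left ℂ
      intro v' hv'
      obtain ⟨v, rfl⟩ : ∃ v : A.domain, (v : H) = v' := ⟨⟨v', hv'⟩, rfl⟩
      have t1 : Filter.Tendsto (fun j => ⟪Au j, (v : H)⟫) Filter.atTop
          (nhds ⟪y, (v : H)⟫) := hy.inner tendsto_const_nhds
      have t2 : ∀ j, ⟪Au j, (v : H)⟫ = ⟪u j, (A v : H)⟫ := fun j =>
        hsym ⟨u j, hKdom _ (humem j)⟩ v
      have t3 : Filter.Tendsto (fun j => ⟪u j, (A v : H)⟫) Filter.atTop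
          (nhds ⟪x, (A v : H)⟫) := hulim.inner tendsto_const_nhds
      simp only [t2] at t1
      calc ⟪y, (v : H)⟫ = ⟪x, (A v : H)⟫ := tendsto_nhds_unique t1 t3
      _ = ⟪(A ⟨x, hx⟩ : H), (v : H)⟫ := (hsym ⟨x, hx⟩ v).symm
    rw [← hyval]
    exact hy
  refine ⟨?_, ?_, ?_⟩
  · intro x hx hxc
    obtain ⟨u, hu, hlim, hAlim⟩ := hmain x hx hxc
    refine mem_closure_of_tendsto (hlim.prodMk_nhds hAlim) ?_
    filter_upwards with j
    exact ⟨hKdom _ (hu j), hu j, rfl⟩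
  · intro x hx hxc
    obtain ⟨u, hu, hlim, hAlim⟩ := hmain x hx hxc
    refine mem_closure_of_tendsto hAlim ?_
    filter_upwards with j
    exact (hAK _ _ (hu j)).1
  · intro x hx hxo
    rw [Submodule.mem_orthogonal]
    intro w hw
    have h1 : ⟪w, (A ⟨x, hx⟩ : H)⟫ = ⟪(A ⟨w, hKdom _ hw⟩ : H), x⟫ :=
      (hsym ⟨w, hKdom _ hw⟩ ⟨x, hx⟩).symm
    rw [h1]
    exact (Submodule.mem_orthogonal K x).mp hxo _ (hAK _ _ hw).1
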